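/- Let A be a ring with an element g admitting compatible p-power roots g^{1/pⁿ}, g ≠ 0. Let S ⊆ A^ℕ be the multiplicative set of sequences (g^{aₙ})ₙ with aₙ ∈ ℕ[1/p] and aₙ → 0, and for an A-module M set 𝒢(M) = S⁻¹(M^ℕ). If f : M → N is an almost isomorphism (kernel and cokernel killed by (g^{1/p^∞})), then the induced map 𝒢(M) → 𝒢(N) is an isomorphism. -/

import Mathlib

set_option synthInstance.maxHeartbeats 1000000
set_option maxHeartbeats 1000000


/-- The map `(ℕ → M) →ₗ[ℕ → A] (ℕ → N)` obtained by applying `f : M →ₗ[A] N`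
componentwise. -/
def piMap {A : Type} [CommRing A] {M N : Type} [AddCommGroup M] [AddCommGroup N]
    [Module A M] [Module A N] (f : M →ₗ[A] N) : (ℕ → M) →ₗ[ℕ → A] (ℕ → N) where
  toFun v := fun n => f (v n)
  map_add' v w := by funext n; simp
  map_smul' a v := by funext n; simp [Pi.smul_apply']

/-- **Gabber's construction turns almost isomorphisms into isomorphisms.**
Let `A` be a ring and `g = g 0 ≠ 0` an element with compatible `p`-power roots.  Let
`S ⊆ A^ℕ` be the multiplicative set of sequences `(g^{aₙ})ₙ` with `aₙ ∈ ℕ[1/p]` and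
`aₙ → 0`, and for an `A`-module `M` set `𝒢(M) = S⁻¹(M^ℕ)`.  If `f : M → N` is an almost
isomorphism in the `g^{1/p^∞}` setting (kernel and cokernel killed by every `g^{1/pᵏ}`),
then the induced map `𝒢(M) → 𝒢(N)` is an isomorphism. -/
theorem statement19 (p : ℕ) [Fact p.Prime] {A : Type} [CommRing A]
    (g : ℕ → A) (hg : ∀ n, (g (n + 1)) ^ p = g n) (hg0 : g 0 ≠ 0)
    (S : Submonoid (ℕ → A))
    (hS : (S : Set (ℕ → A)) = {s | ∃ m k : ℕ → ℕ,
      (∀ n, s n = g (k n) ^ m n) ∧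
      Filter.Tendsto (fun n => (m n : ℝ) / (p : ℝ) ^ k n) Filter.atTop (nhds 0)})
    {M N : Type} [AddCommGroup M] [AddCommGroup N] [Module A M] [Module A N]
    (f : M →ₗ[A] N)
    (hker : ∀ x : M, f x = 0 → ∀ k : ℕ, g k • x = 0)
    (hcoker : ∀ y : N, ∀ k : ℕ, ∃ x : M, g k • y = f x) :
    Function.Bijective (LocalizedModule.map S (piMap f)) := by
  have hp : (1 : ℝ) < p := by exact_mod_cast (Fact.out : p.Prime).one_lt
  have htend : Filter.Tendsto (fun n => (1 : ℝ) / (p : ℝ) ^ n) Filter.atTop (nhds 0) := by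
    simpa [one_div, Function.comp_def] using
      Filter.Tendsto.comp tendsto_inv_atTop_zero (tendsto_pow_atTop_atTop_of_one_lt hp)
  have hgmem : g ∈ S := by
    rw [← SetLike.mem_coe, hS]
    exact ⟨fun _ => 1, id, fun n => (pow_one _).symm, by simpa using htend⟩
  constructor
  · rw [injective_iff_map_eq_zero]
    intro x hx
    induction x using LocalizedModule.induction_on with
    | _ v s =>
      rw [LocalizedModule.map_mk, ← LocalizedModule.zero_mk s, LocalizedModule.mk_eq] at hx
      obtain ⟨u, hu⟩ := hx
      rw [← LocalizedModule.zero_mk s, LocalizedModule.mk_eq]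
      refine ⟨⟨g, hgmem⟩ * u, ?_⟩
      simp only [smul_zero] at hu ⊢
      funext n
      have hfn : f ((u : ℕ → A) n • (s : ℕ → A) n • v n) = 0 := by
        have := congrFun hu n
        simpa [piMap, Submonoid.smul_def, Pi.smul_apply', map_smul] using this
      have h2 := hker _ hfn n
      simp only [Submonoid.smul_def, Submonoid.coe_mul, Pi.mul_apply, Pi.smul_apply',
        mul_smul, Pi.zero_apply]
      exact h2
  · intro y
    induction y using LocalizedModule.induction_on with
    | _ w s =>
      choose x hx using fun n => hcoker (w n) n
      refine ⟨LocalizedModule.mk x (⟨g, hgmem⟩ * s), ?_⟩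
      rw [LocalizedModule.map_mk]
      have : piMap f x = (⟨g, hgmem⟩ : S) • w := by
        funext n
        simpa [piMap, Pi.smul_apply'] using (hx n).symm
      rw [this, LocalizedModule.mk_cancel_common_left]
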